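/- Let m and n be positive integers, P and Q probability distributions on Fin m with the same support, and ε ≥ 0 with KL(P‖Q) ≤ ε. Let G ⊆ (Fin m)^n be a set of n-tuples with Pr_{P^n}[G] ≥ 1/2. Then Pr_{Q^n}[G] ≥ exp(−2·(n·ε + ln 2)), where P^n and Q^n denote the product distributions on (Fin m)^n and Pr_{P^n}[G] = ∑_{t ∈ G} P^n(t). -/

import Mathlib

open Finset

open scoped Classical


lemma aux_prodpos {m n : ℕ} (f : Fin m → ℝ) (hf : ∀ i, 0 ≤ f i) (t : Fin n → Fin m) :
    0 < ∏ j, f (t j) ↔ ∀ j, 0 < f (t j) := by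
  constructor
  · intro h j
    rcases eq_or_lt_of_le (hf (t j)) with he | hl
    · exfalso
      rw [Finset.prod_eq_zero (Finset.mem_univ j) he.symm] at h
      exact lt_irrefl 0 h
    · exact hl
  · intro h
    exact Finset.prod_pos (fun j _ => h j)

lemma aux_split {m n : ℕ} (g : (Fin (n+1) → Fin m) → ℝ) :
    ∑ t : Fin (n+1) → Fin m, g t = ∑ i : Fin m, ∑ s : Fin n → Fin m, g (Fin.cons i s) := by
  rw [← (Fin.consEquiv (fun _ : Fin (n+1) => Fin m)).sum_comp g]
  rw [Fintype.sum_prod_type]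
  rfl

lemma aux_cons_prod {m n : ℕ} (R : Fin m → ℝ) (i : Fin m) (s : Fin n → Fin m) :
    ∏ j, R ((Fin.cons i s : Fin (n+1) → Fin m) j) = R i * ∏ j, R (s j) := by
  rw [Fin.prod_univ_succ]; simp

lemma aux_sum_one {m : ℕ} (R : Fin m → ℝ) (hR : ∑ i, R i = 1) (n : ℕ) :
    ∑ t : Fin n → Fin m, ∏ j, R (t j) = 1 := by
  induction n with
  | zero => simp
  | succ n ih =>
    rw [aux_split (fun t => ∏ j, R (t j))]
    calc ∑ i : Fin m, ∑ s : Fin n → Fin m, ∏ j, R ((Fin.cons i s : Fin (n+1) → Fin m) j)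
        = ∑ i : Fin m, ∑ s : Fin n → Fin m, R i * ∏ j, R (s j) :=
          Finset.sum_congr rfl (fun i _ => Finset.sum_congr rfl (fun s _ => aux_cons_prod R i s))
      _ = ∑ i : Fin m, R i * ∑ s : Fin n → Fin m, ∏ j, R (s j) :=
          Finset.sum_congr rfl (fun i _ => (Finset.mul_sum _ _ _).symm)
      _ = 1 := by simp only [ih, mul_one, hR]

lemma aux_KL {m : ℕ} (P Q : Fin m → ℝ) (hP0 : ∀ i, 0 ≤ P i) (hP1 : ∑ i, P i = 1)
    (hQ0 : ∀ i, 0 ≤ Q i) (hsupp : ∀ i, 0 < P i ↔ 0 < Q i) (n : ℕ) :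
    ∑ t : Fin n → Fin m, (∏ j, P (t j)) * Real.log ((∏ j, P (t j)) / ∏ j, Q (t j))
      = n * ∑ i, P i * Real.log (P i / Q i) := by
  induction n with
  | zero => simp
  | succ n ih =>
    rw [aux_split (fun t => (∏ j, P (t j)) * Real.log ((∏ j, P (t j)) / ∏ j, Q (t j)))]
    have key : ∀ i : Fin m, ∀ s : Fin n → Fin m,
        (∏ j, P ((Fin.cons i s : Fin (n+1) → Fin m) j)) *
          Real.log ((∏ j, P ((Fin.cons i s : Fin (n+1) → Fin m) j)) /
            ∏ j, Q ((Fin.cons i s : Fin (n+1) → Fin m) j))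
        = (∏ j, P (s j)) * (P i * Real.log (P i / Q i))
          + P i * ((∏ j, P (s j)) * Real.log ((∏ j, P (s j)) / ∏ j, Q (s j))) := by
      intro i s
      rw [aux_cons_prod P i s, aux_cons_prod Q i s]
      set Ps := ∏ j, P (s j) with hPs
      set Qs := ∏ j, Q (s j) with hQs
      rcases eq_or_lt_of_le (hP0 i) with hi | hi
      · rw [← hi]; ring
      have hPsnn : (0:ℝ) ≤ Ps := Finset.prod_nonneg (fun j _ => hP0 (s j))
      rcases eq_or_lt_of_le hPsnn with hs | hs
      · rw [← hs]; ring
      have hQi : 0 < Q i := (hsupp i).1 hi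
      have hQs' : 0 < Qs := by
        rw [hQs, aux_prodpos Q hQ0 s]
        intro j
        exact (hsupp (s j)).1 ((aux_prodpos P hP0 s).1 hs j)
      have : (P i * Ps) / (Q i * Qs) = (P i / Q i) * (Ps / Qs) :=
        (div_mul_div_comm _ _ _ _).symm
      rw [this, Real.log_mul (by positivity) (by positivity)]
      ring
    calc ∑ i : Fin m, ∑ s : Fin n → Fin m,
          (∏ j, P ((Fin.cons i s : Fin (n+1) → Fin m) j)) *
          Real.log ((∏ j, P ((Fin.cons i s : Fin (n+1) → Fin m) j)) /
            ∏ j, Q ((Fin.cons i s : Fin (n+1) → Fin m) j))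
        = ∑ i : Fin m, ∑ s : Fin n → Fin m,
            ((∏ j, P (s j)) * (P i * Real.log (P i / Q i))
              + P i * ((∏ j, P (s j)) * Real.log ((∏ j, P (s j)) / ∏ j, Q (s j)))) :=
          Finset.sum_congr rfl (fun i _ => Finset.sum_congr rfl (fun s _ => key i s))
      _ = ∑ i : Fin m, ((∑ s : Fin n → Fin m, ∏ j, P (s j)) * (P i * Real.log (P i / Q i))
            + P i * ∑ s : Fin n → Fin m,
                ((∏ j, P (s j)) * Real.log ((∏ j, P (s j)) / ∏ j, Q (s j)))) := by
          refine Finset.sum_congr rfl (fun i _ => ?_)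
          rw [Finset.sum_add_distrib, ← Finset.sum_mul, ← Finset.mul_sum]
      _ = (n+1 : ℕ) * ∑ i, P i * Real.log (P i / Q i) := by
          rw [aux_sum_one P hP1 n]
          simp only [one_mul, ih]
          rw [Finset.sum_add_distrib, ← Finset.sum_mul]
          push_cast
          rw [hP1]
          ring

lemma aux_xlogx {x : ℝ} (hx : 0 ≤ x) : x - 1 ≤ x * Real.log x := by
  rcases eq_or_lt_of_le hx with h | h
  · simp [← h]
  · have h1 := Real.one_sub_inv_le_log_of_pos h
    have h2 : x * (1 - x⁻¹) ≤ x * Real.log x := mul_le_mul_of_nonneg_left h1 hx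
    have h3 : x * (1 - x⁻¹) = x - 1 := by field_simp
    linarith

lemma aux_main {α : Type*} [Fintype α] (p q : α → ℝ)
    (hp0 : ∀ t, 0 ≤ p t) (hp1 : ∑ t, p t = 1)
    (hq0 : ∀ t, 0 ≤ q t) (hq1 : ∑ t, q t = 1)
    (hsupp : ∀ t, 0 < p t ↔ 0 < q t)
    (κ : ℝ) (hκ : 0 ≤ κ)
    (hKL : ∑ t, p t * Real.log (p t / q t) ≤ κ)
    (G : Finset α) (hG : (1:ℝ)/2 ≤ ∑ t ∈ G, p t) :
    ∑ t ∈ G, q t ≥ Real.exp (-(2 * (κ + Real.log 2))) := by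
  set S : Finset α := G.filter (fun t => 0 < p t) with hS
  have hSsub : S ⊆ G := Finset.filter_subset _ _
  have hSp : ∀ t ∈ S, 0 < p t := fun t ht => (Finset.mem_filter.1 ht).2
  have hSq : ∀ t ∈ S, 0 < q t := fun t ht => (hsupp t).1 (hSp t ht)
  set a : ℝ := ∑ t ∈ S, p t with ha
  set T : ℝ := ∑ t ∈ S, p t * Real.log (p t / q t) with hT
  set b : ℝ := 1 - a with hb
  -- a = P(G)
  have haG : a = ∑ t ∈ G, p t := by
    rw [ha, hS]
    exact Finset.sum_filter_of_ne (fun t _ h => lt_of_le_of_ne (hp0 t) (Ne.symm h))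
  have ha2 : (1:ℝ)/2 ≤ a := haG ▸ hG
  have haub : a ≤ 1 := by
    rw [ha, ← hp1]
    exact Finset.sum_le_sum_of_subset_of_nonneg (Finset.subset_univ S)
      (fun t _ _ => hp0 t)
  have hapos : 0 < a := by linarith
  have hbnn : 0 ≤ b := by rw [hb]; linarith
  set q' : ℝ := ∑ t ∈ S, q t with hq'
  have hq'nn : 0 ≤ q' := Finset.sum_nonneg (fun t _ => hq0 t)
  have hq'G : q' ≤ ∑ t ∈ G, q t :=
    Finset.sum_le_sum_of_subset_of_nonneg hSsub (fun t _ _ => hq0 t)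
  -- sums over the complement
  have hsplit : ∀ f : α → ℝ, ∑ t ∈ Finset.univ \ S, f t + ∑ t ∈ S, f t = ∑ t, f t :=
    fun f => Finset.sum_sdiff (Finset.subset_univ S)
  have hpc : ∑ t ∈ Finset.univ \ S, p t = b := by
    have := hsplit p; rw [hp1] at this; rw [hb]; linarith [ha ▸ this]
  have hqc : ∑ t ∈ Finset.univ \ S, q t = 1 - q' := by
    have := hsplit q; rw [hq1] at this; linarith [hq' ▸ this]
  -- Step A : complement KL lower bound
  have hcomp : b * Real.log b ≤ ∑ t ∈ Finset.univ \ S, p t * Real.log (p t / q t) := by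
    rcases eq_or_lt_of_le hbnn with hb0 | hb0
    · -- b = 0 : every p t = 0 off S
      have hz : ∀ t ∈ Finset.univ \ S, p t = 0 := by
        intro t ht
        have := (Finset.sum_eq_zero_iff_of_nonneg (fun t _ => hp0 t)).1 (hpc.trans hb0.symm)
        exact this t ht
      rw [← hb0]
      have : ∑ t ∈ Finset.univ \ S, p t * Real.log (p t / q t) = 0 :=
        Finset.sum_eq_zero (fun t ht => by rw [hz t ht]; ring)
      simp [this]
    · -- b > 0 : pointwise  p log(p/q) ≥ p - b q + p log b
      have hpt : ∀ t, p t - b * q t + p t * Real.log b ≤ p t * Real.log (p t / q t) := by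
        intro t
        rcases eq_or_lt_of_le (hp0 t) with hp | hp
        · rw [← hp]
          have h0 : 0 ≤ b * q t := mul_nonneg hbnn (hq0 t)
          simp only [zero_mul, add_zero, zero_sub]
          linarith
        · have hq : 0 < q t := (hsupp t).1 hp
          have hlog : Real.log (p t / q t) - Real.log b = Real.log (p t / (q t * b)) := by
            rw [← div_div, Real.log_div (ne_of_gt (div_pos hp hq)) (ne_of_gt hb0)]
          have hy : 0 < p t / (q t * b) := by positivity
          have h1 := Real.one_sub_inv_le_log_of_pos hy
          have h2 : (p t / (q t * b))⁻¹ = q t * b / p t := by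
            rw [inv_div]
          have h3 : p t * (1 - q t * b / p t) ≤ p t * Real.log (p t / (q t * b)) := by
            apply mul_le_mul_of_nonneg_left _ (le_of_lt hp)
            rw [← h2]; exact h1
          have h4 : p t * (1 - q t * b / p t) = p t - q t * b := by
            field_simp
          nlinarith [hlog, h3, h4]
      calc b * Real.log b
          ≤ b * q' + b * Real.log b := by nlinarith [mul_nonneg hbnn hq'nn]
        _ = b - b * (1 - q') + b * Real.log b := by ring
        _ = ∑ t ∈ Finset.univ \ S, (p t - b * q t + p t * Real.log b) := by
            rw [Finset.sum_add_distrib, Finset.sum_sub_distrib, ← Finset.mul_sum,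
              ← Finset.sum_mul, hpc, hqc]
        _ ≤ ∑ t ∈ Finset.univ \ S, p t * Real.log (p t / q t) :=
            Finset.sum_le_sum (fun t _ => hpt t)
  -- Step B : T ≤ κ - b log b
  have hTub : T ≤ κ - b * Real.log b := by
    have := hsplit (fun t => p t * Real.log (p t / q t))
    have h2 : T = ∑ t, p t * Real.log (p t / q t)
        - ∑ t ∈ Finset.univ \ S, p t * Real.log (p t / q t) := by
      rw [hT]; linarith
    rw [h2]; linarith
  -- Step C : Jensen
  set c : ℝ := -T / a with hc
  have hca : c * a = -T := div_mul_cancel₀ _ (ne_of_gt hapos)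
  clear_value S a T b q' c
  have hjen : Real.exp c * a ≤ q' := by
    have hpt : ∀ t ∈ S,
        p t * Real.exp c * (1 + (-(Real.log (p t / q t)) - c)) ≤ q t := by
      intro t ht
      have hp := hSp t ht
      have hq := hSq t ht
      have hqeq : q t = p t * Real.exp (-(Real.log (p t / q t))) := by
        rw [← Real.log_inv, inv_div, Real.exp_log (div_pos hq hp), mul_comm,
          div_mul_cancel₀ _ (ne_of_gt hp)]
      calc p t * Real.exp c * (1 + (-(Real.log (p t / q t)) - c))
          ≤ p t * Real.exp c * Real.exp (-(Real.log (p t / q t)) - c) := by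
            apply mul_le_mul_of_nonneg_left _ (by positivity)
            have := Real.add_one_le_exp (-(Real.log (p t / q t)) - c)
            linarith
        _ = p t * Real.exp (-(Real.log (p t / q t))) := by
            rw [mul_assoc, ← Real.exp_add]
            congr 2
            ring
        _ = q t := hqeq.symm
    have hsum : ∑ t ∈ S, p t * Real.exp c * (1 + (-(Real.log (p t / q t)) - c))
        = Real.exp c * (a - T - c * a) := by
      have heach : ∀ t, p t * Real.exp c * (1 + (-(Real.log (p t / q t)) - c))
          = Real.exp c * (p t - p t * Real.log (p t / q t) - c * p t) := fun t => by ring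
      rw [Finset.sum_congr rfl (fun t _ => heach t), ← Finset.mul_sum]
      congr 1
      rw [Finset.sum_sub_distrib, Finset.sum_sub_distrib, ← Finset.mul_sum, ← ha, ← hT]
    calc Real.exp c * a = Real.exp c * (a - T - c * a) := by rw [hca]; ring
      _ = ∑ t ∈ S, p t * Real.exp c * (1 + (-(Real.log (p t / q t)) - c)) := hsum.symm
      _ ≤ ∑ t ∈ S, q t := Finset.sum_le_sum hpt
      _ = q' := hq'.symm
  -- Step D : lower bound the exponent
  have hl2 : (0:ℝ) ≤ Real.log 2 := Real.log_nonneg (by norm_num)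
  have hD : a * Real.log a + b * Real.log b + 2 * a * Real.log 2 ≥ 0 := by
    have h1 : 2*a - 1 ≤ 2*a * Real.log (2*a) := aux_xlogx (by linarith)
    have hla : Real.log (2*a) = Real.log 2 + Real.log a :=
      Real.log_mul two_ne_zero (ne_of_gt hapos)
    rcases eq_or_lt_of_le hbnn with hb0 | hb0
    · have hab : a = 1 := by rw [hb] at hb0; linarith
      rw [hab]
      simp [← hb0]
      linarith
    · have h2 : 2*b - 1 ≤ 2*b * Real.log (2*b) := aux_xlogx (by linarith)
      have hlb : Real.log (2*b) = Real.log 2 + Real.log b :=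
        Real.log_mul two_ne_zero (ne_of_gt hb0)
      rw [hla] at h1
      rw [hlb] at h2
      have hab : a + b = 1 := by rw [hb]; ring
      nlinarith [mul_nonneg (by linarith : (0:ℝ) ≤ 2*a - 1) hl2]
  have hexp : -(2 * (κ + Real.log 2)) ≤ Real.log a + c := by
    have hκa : (2*a - 1) * κ ≥ 0 := mul_nonneg (by linarith) hκ
    have hmul : -(2 * (κ + Real.log 2)) * a ≤ a * Real.log a - T := by
      linarith [hD, hTub, hκa]
    have hdiv : -(2 * (κ + Real.log 2)) ≤ (a * Real.log a - T) / a :=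
      (le_div_iff₀ hapos).2 hmul
    have : (a * Real.log a - T) / a = Real.log a + c := by
      rw [hc, sub_div, mul_comm, mul_div_assoc, div_self (ne_of_gt hapos), mul_one]
      ring
    rw [this] at hdiv
    linarith
  -- conclude
  have hfin : Real.exp (-(2 * (κ + Real.log 2))) ≤ Real.exp c * a := by
    have : Real.exp c * a = Real.exp (Real.log a + c) := by
      rw [Real.exp_add, Real.exp_log hapos]; ring
    rw [this]
    exact Real.exp_le_exp.2 hexp
  linarith [hjen, hq'G]

set_option maxHeartbeats 1000000 in
/-- an event of probability at least `1/2` under `P^n` has probability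
at least `exp(-2(nε + ln 2))` under `Q^n`, provided `KL(P‖Q) ≤ ε`. -/
theorem stmt_11 (m n : ℕ) (hm : 0 < m) (hn : 0 < n)
    (P Q : Fin m → ℝ)
    (hP0 : ∀ i, 0 ≤ P i) (hP1 : ∑ i, P i = 1)
    (hQ0 : ∀ i, 0 ≤ Q i) (hQ1 : ∑ i, Q i = 1)
    (hsupp : ∀ i, 0 < P i ↔ 0 < Q i)
    (ε : ℝ) (hε : 0 ≤ ε)
    (hKL : ∑ i ∈ Finset.univ.filter (fun i => 0 < P i),
        P i * Real.log (P i / Q i) ≤ ε)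
    (G : Finset (Fin n → Fin m))
    (hG : (1 : ℝ)/2 ≤ ∑ t ∈ G, ∏ j, P (t j)) :
    ∑ t ∈ G, ∏ j, Q (t j) ≥ Real.exp (-(2 * (n * ε + Real.log 2))) := by
  have hfull : ∑ i, P i * Real.log (P i / Q i) ≤ ε := by
    rw [← Finset.sum_filter_of_ne
      (fun i _ h => by
        rcases eq_or_lt_of_le (hP0 i) with he | hl
        · exact absurd (by rw [← he]; ring) h
        · exact hl)]
    exact hKL
  have hKLn : ∑ t : Fin n → Fin m,
      (∏ j, P (t j)) * Real.log ((∏ j, P (t j)) / ∏ j, Q (t j)) ≤ (n : ℝ) * ε := by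
    rw [aux_KL P Q hP0 hP1 hQ0 hsupp n]
    exact mul_le_mul_of_nonneg_left hfull (Nat.cast_nonneg n)
  exact aux_main (fun t => ∏ j, P (t j)) (fun t => ∏ j, Q (t j))
    (fun t => Finset.prod_nonneg (fun j _ => hP0 (t j)))
    (aux_sum_one P hP1 n)
    (fun t => Finset.prod_nonneg (fun j _ => hQ0 (t j)))
    (aux_sum_one Q hQ1 n)
    (fun t => by
      rw [aux_prodpos P hP0 t, aux_prodpos Q hQ0 t]
      exact forall_congr' (fun j => hsupp (t j)))
    ((n : ℝ) * ε)
    (mul_nonneg (Nat.cast_nonneg n) hε)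
    hKLn G hG
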